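/- There exists a constant K > 0 such that for all t ≥ 0: ∫_0^t (1+t) / ( √(t−s) (1 + √(t−s)) (1+s)² ) ds ≤ K. -/

import Mathlib

open MeasureTheory intervalIntegral Set

lemma aux_int_rpow (t a : ℝ) :
    IntervalIntegrable (fun s => (t - s) ^ (-(1/2) : ℝ)) volume a t := by
  have h := (intervalIntegral.intervalIntegrable_rpow' (a := t - a) (b := t - t)
    (r := -(1/2)) (by norm_num)).comp_sub_left t
  simpa using h

lemma aux_val_rpow (t a : ℝ) (h : a ≤ t) :
    ∫ s in a..t, (t - s) ^ (-(1/2) : ℝ) = 2 * Real.sqrt (t - a) := by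
  rw [intervalIntegral.integral_comp_sub_left (fun x => x ^ (-(1/2) : ℝ)) t, sub_self,
    integral_rpow (Or.inl (by norm_num)), Real.zero_rpow (by norm_num),
    Real.sqrt_eq_rpow]
  norm_num
  ring

/-- Uniform bound for the convolution of the heat-type decay factor
`1/(√(t-s)(1+√(t-s)))` with a source decaying like `(1+s)^{-2}`, weighted by `1+t`. -/
theorem stmt_14 :
    ∃ K : ℝ, 0 < K ∧ ∀ t : ℝ, 0 ≤ t →
      (∫ s in (0:ℝ)..t,
        (1 + t) / (Real.sqrt (t - s) * (1 + Real.sqrt (t - s)) * (1 + s) ^ 2)) ≤ K := by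
  refine ⟨12, by norm_num, fun t ht => ?_⟩
  set f : ℝ → ℝ := fun s =>
    (1 + t) / (Real.sqrt (t - s) * (1 + Real.sqrt (t - s)) * (1 + s) ^ 2) with hf_def
  have hfm : Measurable f := by
    apply Measurable.div measurable_const
    have hc : Continuous fun s : ℝ => Real.sqrt (t - s) :=
      Real.continuous_sqrt.comp (continuous_const.sub continuous_id)
    exact ((hc.mul (continuous_const.add hc)).mul
      ((continuous_const.add continuous_id).pow 2)).measurable
  have hf_nonneg : ∀ s, 0 ≤ f s := by
    intro s
    apply div_nonneg (by linarith)
    have h1 := Real.sqrt_nonneg (t - s)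
    positivity
  rcases le_total t 1 with ht1 | ht1
  · -- case t ≤ 1
    set g : ℝ → ℝ := fun s => 2 * (t - s) ^ (-(1/2) : ℝ) with hg_def
    have hg_int : IntervalIntegrable g volume 0 t := (aux_int_rpow t 0).const_mul 2
    have hle : ∀ s ∈ Icc (0:ℝ) t, f s ≤ g s := by
      intro s hs
      have hx : (0:ℝ) ≤ t - s := by linarith [hs.2]
      have hsq := Real.sqrt_nonneg (t - s)
      have hrw : (t - s) ^ (-(1/2) : ℝ) = (Real.sqrt (t - s))⁻¹ := by
        rw [Real.rpow_neg hx, Real.sqrt_eq_rpow]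
      have hgs : g s = 2 * (Real.sqrt (t - s))⁻¹ := by
        show 2 * (t - s) ^ (-(1/2) : ℝ) = _
        rw [hrw]
      rcases eq_or_lt_of_le hsq with h0 | h0
      · have hfs : f s = 0 := by
          show (1 + t) / (Real.sqrt (t - s) * (1 + Real.sqrt (t - s)) * (1 + s) ^ 2) = 0
          rw [← h0]; simp
        rw [hfs, hgs]
        positivity
      · have hone : (1:ℝ) ≤ (1 + Real.sqrt (t - s)) * (1 + s) ^ 2 := by
          nlinarith [hs.1, sq_nonneg (1 + s)]
        have hD : Real.sqrt (t - s) ≤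
            Real.sqrt (t - s) * (1 + Real.sqrt (t - s)) * (1 + s) ^ 2 := by
          nlinarith [mul_le_mul_of_nonneg_left hone hsq]
        have : f s ≤ 2 / Real.sqrt (t - s) :=
          div_le_div₀ (by norm_num) (by linarith) h0 hD
        rw [hgs, ← div_eq_mul_inv]
        exact this
    have hf_int : IntervalIntegrable f volume 0 t := by
      apply hg_int.mono_fun' (hfm.aestronglyMeasurable)
      filter_upwards [ae_restrict_mem measurableSet_uIoc] with s hs
      rw [Set.uIoc_of_le ht] at hs
      rw [Real.norm_eq_abs, abs_of_nonneg (hf_nonneg s)]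
      exact hle s (Ioc_subset_Icc_self hs)
    have h1 : (∫ s in (0:ℝ)..t, f s) ≤ ∫ s in (0:ℝ)..t, g s :=
      intervalIntegral.integral_mono_on ht hf_int hg_int hle
    have h2 : (∫ s in (0:ℝ)..t, g s) = 4 * Real.sqrt t := by
      rw [hg_def]
      rw [intervalIntegral.integral_const_mul, aux_val_rpow t 0 ht]
      ring_nf
    have h3 : Real.sqrt t ≤ 1 := Real.sqrt_le_one.2 ht1
    calc (∫ s in (0:ℝ)..t, f s) ≤ 4 * Real.sqrt t := by rw [← h2]; exact h1
      _ ≤ 12 := by nlinarith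
  · -- case 1 ≤ t
    set m : ℝ := t / 2 with hm_def
    have hm0 : (0:ℝ) ≤ m := by positivity
    have hmt : m ≤ t := by simp [hm_def]; linarith
    -- piece 1: on [0, m]
    set g1 : ℝ → ℝ := fun s => 4 / (1 + s) ^ 2 with hg1_def
    have hg1_cont : ContinuousOn g1 (Icc 0 m) := by
      apply ContinuousOn.div continuousOn_const
      · exact ((continuous_const.add continuous_id).pow 2).continuousOn
      · intro s hs
        have : 0 < 1 + s := by linarith [hs.1]
        positivity
    have hg1_int : IntervalIntegrable g1 volume 0 m := by
      apply ContinuousOn.intervalIntegrable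
      rwa [Set.uIcc_of_le hm0]
    have hle1 : ∀ s ∈ Icc (0:ℝ) m, f s ≤ g1 s := by
      intro s hs
      have hx : m ≤ t - s := by simp only [hm_def] at *; linarith [hs.2]
      have hx0 : (0:ℝ) < t - s := by linarith
      have hsq := Real.sqrt_nonneg (t - s)
      have hsqsq : Real.sqrt (t - s) * Real.sqrt (t - s) = t - s :=
        Real.mul_self_sqrt hx0.le
      have hsqpos : 0 < Real.sqrt (t - s) := Real.sqrt_pos.2 hx0
      have hP : (0:ℝ) < (1 + s) ^ 2 := by nlinarith [hs.1]
      have hDpos : 0 < Real.sqrt (t - s) * (1 + Real.sqrt (t - s)) * (1 + s) ^ 2 := by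
        positivity
      rw [hf_def, hg1_def, div_le_div_iff₀ hDpos hP]
      -- (1+t)(1+s)^2 ≤ 4 * (√x(1+√x)(1+s)^2)
      have hQ : t / 2 ≤ Real.sqrt (t - s) * (1 + Real.sqrt (t - s)) := by
        nlinarith
      have h1t : 1 + t ≤ 4 * (t / 2) := by linarith
      nlinarith [mul_le_mul_of_nonneg_right hQ hP.le,
        mul_le_mul_of_nonneg_right h1t hP.le]
    have hf_int1 : IntervalIntegrable f volume 0 m := by
      apply hg1_int.mono_fun' (hfm.aestronglyMeasurable)
      filter_upwards [ae_restrict_mem measurableSet_uIoc] with s hs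
      rw [Set.uIoc_of_le hm0] at hs
      rw [Real.norm_eq_abs, abs_of_nonneg (hf_nonneg s)]
      exact hle1 s (Ioc_subset_Icc_self hs)
    -- piece 2: on [m, t]
    set g2 : ℝ → ℝ := fun s => (4 / (1 + t)) * (t - s) ^ (-(1/2) : ℝ) with hg2_def
    have hg2_int : IntervalIntegrable g2 volume m t := (aux_int_rpow t m).const_mul _
    have hle2 : ∀ s ∈ Icc m t, f s ≤ g2 s := by
      intro s hs
      have hx : (0:ℝ) ≤ t - s := by linarith [hs.2]
      have hsq := Real.sqrt_nonneg (t - s)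
      have hrw : (t - s) ^ (-(1/2) : ℝ) = (Real.sqrt (t - s))⁻¹ := by
        rw [Real.rpow_neg hx, Real.sqrt_eq_rpow]
      have h1t : (0:ℝ) < 1 + t := by linarith
      have hg2s : g2 s = 4 / (1 + t) * (Real.sqrt (t - s))⁻¹ := by
        show 4 / (1 + t) * (t - s) ^ (-(1/2) : ℝ) = _
        rw [hrw]
      rcases eq_or_lt_of_le hsq with h0 | h0
      · have hfs : f s = 0 := by
          show (1 + t) / (Real.sqrt (t - s) * (1 + Real.sqrt (t - s)) * (1 + s) ^ 2) = 0
          rw [← h0]; simp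
        rw [hfs, hg2s]
        positivity
      · have hsm : m ≤ s := hs.1
        have hP : (0:ℝ) < (1 + s) ^ 2 := by nlinarith [hm0.trans hsm]
        have hDpos : 0 < Real.sqrt (t - s) * (1 + Real.sqrt (t - s)) * (1 + s) ^ 2 := by
          positivity
        have hgoal : (1 + t) / (Real.sqrt (t - s) * (1 + Real.sqrt (t - s)) * (1 + s) ^ 2)
            ≤ 4 / ((1 + t) * Real.sqrt (t - s)) := by
          rw [div_le_div_iff₀ hDpos (by positivity)]
          have hsq4 : (1 + t) ^ 2 ≤ 4 * (1 + s) ^ 2 := by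
            have : 1 + t ≤ 2 * (1 + s) := by simp only [hm_def] at hsm; linarith
            nlinarith
          nlinarith [mul_le_mul_of_nonneg_left hsq4 h0.le,
            mul_nonneg h0.le hP.le, mul_nonneg (mul_nonneg h0.le h0.le) hP.le]
        calc f s ≤ 4 / ((1 + t) * Real.sqrt (t - s)) := hgoal
          _ = 4 / (1 + t) * (Real.sqrt (t - s))⁻¹ := by
              rw [div_mul_eq_div_div, div_eq_mul_inv]
          _ = g2 s := hg2s.symm
    have hf_int2 : IntervalIntegrable f volume m t := by
      apply hg2_int.mono_fun' (hfm.aestronglyMeasurable)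
      filter_upwards [ae_restrict_mem measurableSet_uIoc] with s hs
      rw [Set.uIoc_of_le hmt] at hs
      rw [Real.norm_eq_abs, abs_of_nonneg (hf_nonneg s)]
      exact hle2 s (Ioc_subset_Icc_self hs)
    -- compute bounds
    have hA : (∫ s in (0:ℝ)..m, f s) ≤ 4 := by
      have h1 : (∫ s in (0:ℝ)..m, f s) ≤ ∫ s in (0:ℝ)..m, g1 s :=
        intervalIntegral.integral_mono_on hm0 hf_int1 hg1_int hle1
      have h2 : (∫ s in (0:ℝ)..m, g1 s) =
          (fun u : ℝ => -(4 / (1 + u))) m - (fun u : ℝ => -(4 / (1 + u))) 0 := by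
        refine intervalIntegral.integral_eq_sub_of_hasDerivAt (f := fun u : ℝ => -(4 / (1 + u)))
          (fun s hs => ?_) hg1_int
        rw [Set.uIcc_of_le hm0] at hs
        have hne : (1:ℝ) + s ≠ 0 := by linarith [hs.1]
        have h := (((hasDerivAt_id s).const_add (1:ℝ)).inv hne).const_mul (-4 : ℝ)
        convert h using 1
        · rfl
        · funext u; simp only [id_eq, Pi.inv_apply]; ring
        · simp only [hg1_def, id_eq]; ring
      simp only [] at h2
      have h3 : (0:ℝ) < 1 + m := by linarith
      have h4 : 0 ≤ 4 / (1 + m) := by positivity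
      calc (∫ s in (0:ℝ)..m, f s) ≤ ∫ s in (0:ℝ)..m, g1 s := h1
        _ = 4 - 4 / (1 + m) := by rw [h2]; ring
        _ ≤ 4 := by linarith
    have hB : (∫ s in m..t, f s) ≤ 8 := by
      have h1 : (∫ s in m..t, f s) ≤ ∫ s in m..t, g2 s :=
        intervalIntegral.integral_mono_on hmt hf_int2 hg2_int hle2
      have h2 : (∫ s in m..t, g2 s) = 4 / (1 + t) * (2 * Real.sqrt (t - m)) := by
        rw [hg2_def, intervalIntegral.integral_const_mul, aux_val_rpow t m hmt]
      have hsb : Real.sqrt (t - m) ≤ 1 + t := by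
        calc Real.sqrt (t - m) ≤ Real.sqrt t := Real.sqrt_le_sqrt (by linarith)
          _ ≤ t := by
              nlinarith [Real.sq_sqrt ht, Real.sqrt_nonneg t, sq_nonneg (Real.sqrt t - 1)]
          _ ≤ 1 + t := by linarith
      have h1t : (0:ℝ) < 1 + t := by linarith
      have h3 : 4 / (1 + t) * (2 * Real.sqrt (t - m)) ≤ 8 := by
        rw [div_mul_eq_mul_div, div_le_iff₀ h1t]
        nlinarith [Real.sqrt_nonneg (t - m)]
      calc (∫ s in m..t, f s) ≤ ∫ s in m..t, g2 s := h1
        _ = 4 / (1 + t) * (2 * Real.sqrt (t - m)) := h2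
        _ ≤ 8 := h3
    have hsplit : (∫ s in (0:ℝ)..t, f s) = (∫ s in (0:ℝ)..m, f s) + ∫ s in m..t, f s :=
      (intervalIntegral.integral_add_adjacent_intervals hf_int1 hf_int2).symm
    calc (∫ s in (0:ℝ)..t, f s) = (∫ s in (0:ℝ)..m, f s) + ∫ s in m..t, f s := hsplit
      _ ≤ 4 + 8 := add_le_add hA hB
      _ = 12 := by norm_num
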